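/- arXiv:1912.06476 — 3 statements merged into one kernel-verified Lean document; each statement's English description precedes it below -/
import Mathlib

section
/- Under hypotheses (H1)–(H4) and K ≥ 0, D ≥ 0, C > 0, the fixed stress split scheme satisfies the contraction-type inequality: ‖s‖² + ‖p‖² + (3/C)·K + (3/C)·D + (3/(2C²))·‖ζ‖² − (3/C²)·[(7/2)·‖ζ_p − φ_p‖² + (1/2)·‖φ‖² + (C/3)·⟪s, φ⟫] ≤ (1/2)·‖s₋‖². -/
open scoped RealInnerProductSpace

/-- Contraction-type inequality for the fixed stress split scheme
(anisotropic poroelastoplasticity coupled with single phase flow). -/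
theorem fixed_stress_split_contraction_inequality
    {H : Type*} [NormedAddCommGroup H] [InnerProductSpace ℝ H]
    (C K D : ℝ) (p s sm φ ζ ζp φp : H)
    (hC : 0 < C) (hK : 0 ≤ K) (hD : 0 ≤ D)
    (H1 : C * ‖p‖ ^ 2 + K + ⟪φ, p⟫ = -(C / 3) * ⟪sm, p⟫)
    (H2 : D + (C / 3) * ⟪s, p⟫ = 0)
    (H3 : ζ = C • p + (C / 3) • s + φ)
    (H4 : ζp = (C / 3) • s + φp) :
    ‖s‖ ^ 2 + ‖p‖ ^ 2 + (3 / C) * K + (3 / C) * D + (3 / (2 * C ^ 2)) * ‖ζ‖ ^ 2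
      - (3 / C ^ 2) * ((7 / 2) * ‖ζp - φp‖ ^ 2 + (1 / 2) * ‖φ‖ ^ 2
          + (C / 3) * ⟪s, φ⟫)
      ≤ (1 / 2) * ‖sm‖ ^ 2 := by
  have hsym1 : ⟪φ, p⟫ = ⟪p, φ⟫ := real_inner_comm _ _
  have hsym2 : ⟪sm, p⟫ = ⟪p, sm⟫ := real_inner_comm _ _
  have hsym3 : ⟪s, p⟫ = ⟪p, s⟫ := real_inner_comm _ _
  have e1 : ‖ζp - φp‖ ^ 2 = (C / 3) ^ 2 * ‖s‖ ^ 2 := by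
    rw [H4, add_sub_cancel_right, norm_smul, mul_pow, Real.norm_eq_abs, sq_abs]
  have e2 : ‖ζ‖ ^ 2 = C ^ 2 * ‖p‖ ^ 2 + (C / 3) ^ 2 * ‖s‖ ^ 2 + ‖φ‖ ^ 2
      + 2 * (C * (C / 3)) * ⟪p, s⟫ + 2 * C * ⟪p, φ⟫ + 2 * (C / 3) * ⟪s, φ⟫ := by
    rw [H3, @norm_add_sq_real, @norm_add_sq_real]
    simp only [inner_add_left, inner_add_right, real_inner_smul_left, real_inner_smul_right,
      norm_smul, mul_pow, sq_abs, Real.norm_eq_abs]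
    ring
  have e4 : ‖p + sm‖ ^ 2 = ‖p‖ ^ 2 + 2 * ⟪p, sm⟫ + ‖sm‖ ^ 2 := norm_add_sq_real p sm
  have e3 : (0 : ℝ) ≤ ‖p + sm‖ ^ 2 := sq_nonneg _
  have hK2 : 3 * K = -3 * C * ‖p‖ ^ 2 - 3 * ⟪φ, p⟫ - C * ⟪sm, p⟫ := by
    linear_combination 3 * H1
  have hD2 : 3 * D = -C * ⟪s, p⟫ := by linear_combination 3 * H2
  have hCne : C ≠ 0 := ne_of_gt hC
  have key : ‖s‖ ^ 2 + ‖p‖ ^ 2 + (3 / C) * K + (3 / C) * D + (3 / (2 * C ^ 2)) * ‖ζ‖ ^ 2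
      - (3 / C ^ 2) * ((7 / 2) * ‖ζp - φp‖ ^ 2 + (1 / 2) * ‖φ‖ ^ 2
          + (C / 3) * ⟪s, φ⟫)
      = (1 / 2) * ‖sm‖ ^ 2 - (1 / 2) * ‖p + sm‖ ^ 2 := by
    rw [e1, e2, e4]
    linear_combination (norm := (field_simp; ring)) (1 / C) * hK2 + (1 / C) * hD2 - (3 / C) * hsym1
      - hsym2 - hsym3
  linarith [key, e3]
end

section
/- Under hypotheses (H1), (H2), (H3) and C > 0, the combined flow–poromechanics identity holds: (C/2)·‖p‖² + K + D + (1/(2C))·‖ζ‖² − (C/18)·‖s‖² − (1/(2C))·‖φ‖² − (1/3)·⟪s, φ⟫ = −(C/3)·⟪s₋, p⟫. -/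
open scoped RealInnerProductSpace

/-- Combined flow–poromechanics identity. -/
theorem combined_flow_poromechanics_identity
    {H : Type*} [NormedAddCommGroup H] [InnerProductSpace ℝ H]
    (C K D : ℝ) (p s sm φ ζ : H) (hC : 0 < C)
    (H1 : C * ‖p‖ ^ 2 + K + ⟪φ, p⟫ = -(C / 3) * ⟪sm, p⟫)
    (H2 : D + (C / 3) * ⟪s, p⟫ = 0)
    (H3 : ζ = C • p + (C / 3) • s + φ) :
    (C / 2) * ‖p‖ ^ 2 + K + D + (1 / (2 * C)) * ‖ζ‖ ^ 2
      - (C / 18) * ‖s‖ ^ 2 - (1 / (2 * C)) * ‖φ‖ ^ 2 - (1 / 3) * ⟪s, φ⟫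
      = -(C / 3) * ⟪sm, p⟫ := by
  have hz : ‖ζ‖ ^ 2 = ⟪ζ, ζ⟫ := (real_inner_self_eq_norm_sq ζ).symm
  have hp : ‖p‖ ^ 2 = ⟪p, p⟫ := (real_inner_self_eq_norm_sq p).symm
  have hs : ‖s‖ ^ 2 = ⟪s, s⟫ := (real_inner_self_eq_norm_sq s).symm
  have hf : ‖φ‖ ^ 2 = ⟪φ, φ⟫ := (real_inner_self_eq_norm_sq φ).symm
  subst H3
  simp only [hz, hp, hs, hf, inner_add_add_self, inner_add_left, inner_add_right,
    real_inner_smul_left, real_inner_smul_right] at *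
  rw [real_inner_comm p s] at *
  rw [real_inner_comm p φ] at *
  rw [real_inner_comm φ s] at *
  have hC' : C ≠ 0 := ne_of_gt hC
  field_simp at *
  ring_nf at *
  nlinarith [H1, H2]
end

section
/- Under hypotheses (H1)–(H4) and C > 0, the pre-Young identity holds: (C²/3)·‖s‖² + (C²/2)·‖p‖² + C·K + C·D + (1/2)·‖ζ‖² − (7/2)·‖ζ_p − φ_p‖² − (1/2)·‖φ‖² − (C/3)·⟪s, φ⟫ = −(C²/3)·⟪s₋, p⟫. -/
open scoped RealInnerProductSpace

/-- Pre-Young identity for the fixed stress split scheme. -/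
theorem pre_young_identity
    {H : Type*} [NormedAddCommGroup H] [InnerProductSpace ℝ H]
    (C K D : ℝ) (p s sm φ ζ ζp φp : H) (hC : 0 < C)
    (H1 : C * ‖p‖ ^ 2 + K + ⟪φ, p⟫ = -(C / 3) * ⟪sm, p⟫)
    (H2 : D + (C / 3) * ⟪s, p⟫ = 0)
    (H3 : ζ = C • p + (C / 3) • s + φ)
    (H4 : ζp = (C / 3) • s + φp) :
    (C ^ 2 / 3) * ‖s‖ ^ 2 + (C ^ 2 / 2) * ‖p‖ ^ 2 + C * K + C * D
      + (1 / 2) * ‖ζ‖ ^ 2 - (7 / 2) * ‖ζp - φp‖ ^ 2 - (1 / 2) * ‖φ‖ ^ 2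
      - (C / 3) * ⟪s, φ⟫
      = -(C ^ 2 / 3) * ⟪sm, p⟫ := by
  subst H3 H4
  simp only [add_sub_cancel_right, ← real_inner_self_eq_norm_sq]
  simp only [inner_add_add_self, inner_add_left, inner_add_right,
    real_inner_smul_left, real_inner_smul_right, real_inner_comm s p,
    real_inner_comm φ p, real_inner_comm φ s]
  nlinarith [H1, H2, real_inner_self_eq_norm_sq p, real_inner_self_eq_norm_sq φ]
end
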